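/- arXiv:2502.11784 — 9 statements merged into one kernel-verified Lean document; each statement's English description precedes it below -/
import Mathlib

section
/- For a unitary U, the Kirkwood-Dirac superoperator of U† is the inverse of that of U, and its entries satisfy (Ê_{U†})_{ij,kl} = |⟨b_j|a_i⟩/⟨b_l|a_k⟩|² · conj((Ê_U)_{kl,ij}). -/
lemma kd_alg (x cr cq A1 B1 A2 B2 : ℂ) (hcr : cr ≠ 0) :
    (x / cr * A1 * B1) * (cr / cq * A2 * B2)
      = x / cq * ((A1 * A2) * (B2 * B1)) := by
  field_simp

lemma kd_key (d : ℕ)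
    (a b : OrthonormalBasis (Fin d) ℂ (EuclideanSpace ℂ (Fin d)))
    (hab : ∀ i j, (inner ℂ (b j) (a i) : ℂ) ≠ 0)
    (V : EuclideanSpace ℂ (Fin d) →ₗ[ℂ] EuclideanSpace ℂ (Fin d))
    (hV1 : (LinearMap.adjoint V) ∘ₗ V = LinearMap.id)
    (p q : Fin d × Fin d) :
    (∑ r : Fin d × Fin d,
      (((inner ℂ (b p.2) (a p.1) : ℂ) / (inner ℂ (b r.2) (a r.1) : ℂ)) *
        (inner ℂ (a p.1) ((LinearMap.adjoint V) (a r.1)) : ℂ) *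
        (inner ℂ (b r.2) (V (b p.2)) : ℂ)) *
      (((inner ℂ (b r.2) (a r.1) : ℂ) / (inner ℂ (b q.2) (a q.1) : ℂ)) *
        (inner ℂ (a r.1) (V (a q.1)) : ℂ) *
        (inner ℂ (b q.2) ((LinearMap.adjoint V) (b r.2)) : ℂ)))
    = if p = q then 1 else 0 := by
  have hVV : ∀ x : EuclideanSpace ℂ (Fin d), (LinearMap.adjoint V) (V x) = x := by
    intro x
    have := congrArg (fun f => f x) hV1
    simpa using this
  have hc : (∀ r : Fin d × Fin d,
      (((inner ℂ (b p.2) (a p.1) : ℂ) / (inner ℂ (b r.2) (a r.1) : ℂ)) *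
        (inner ℂ (a p.1) ((LinearMap.adjoint V) (a r.1)) : ℂ) *
        (inner ℂ (b r.2) (V (b p.2)) : ℂ)) *
      (((inner ℂ (b r.2) (a r.1) : ℂ) / (inner ℂ (b q.2) (a q.1) : ℂ)) *
        (inner ℂ (a r.1) (V (a q.1)) : ℂ) *
        (inner ℂ (b q.2) ((LinearMap.adjoint V) (b r.2)) : ℂ))
      = ((inner ℂ (b p.2) (a p.1) : ℂ) / (inner ℂ (b q.2) (a q.1) : ℂ)) *
        (((inner ℂ ((V (a p.1)) : EuclideanSpace ℂ (Fin d)) (a r.1) : ℂ) *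
          (inner ℂ (a r.1) (V (a q.1)) : ℂ)) *
         ((inner ℂ ((V (b q.2)) : EuclideanSpace ℂ (Fin d)) (b r.2) : ℂ) *
          (inner ℂ (b r.2) (V (b p.2)) : ℂ)))) := by
    intro r
    rw [LinearMap.adjoint_inner_right, LinearMap.adjoint_inner_right]
    exact kd_alg _ _ _ _ _ _ _ (hab r.1 r.2)
  rw [Finset.sum_congr rfl (fun r _ => hc r), ← Finset.mul_sum,
    Fintype.sum_prod_type]
  simp_rw [← Finset.mul_sum, ← Finset.sum_mul]
  have hA : (∑ r1 : Fin d, (inner ℂ ((V (a p.1)) : EuclideanSpace ℂ (Fin d)) (a r1) : ℂ) *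
      (inner ℂ (a r1) (V (a q.1)) : ℂ)) = if p.1 = q.1 then 1 else 0 := by
    rw [OrthonormalBasis.sum_inner_mul_inner, ← LinearMap.adjoint_inner_right, hVV]
    exact orthonormal_iff_ite.mp a.orthonormal p.1 q.1
  have hB : (∑ r2 : Fin d, (inner ℂ ((V (b q.2)) : EuclideanSpace ℂ (Fin d)) (b r2) : ℂ) *
      (inner ℂ (b r2) (V (b p.2)) : ℂ)) = if q.2 = p.2 then 1 else 0 := by
    rw [OrthonormalBasis.sum_inner_mul_inner, ← LinearMap.adjoint_inner_right, hVV]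
    exact orthonormal_iff_ite.mp b.orthonormal q.2 p.2
  rw [hA, hB]
  by_cases h : p = q
  · subst h; rw [div_self (hab p.1 p.2)]; simp
  · have : ¬ (p.1 = q.1 ∧ q.2 = p.2) := by
      intro ⟨h1, h2⟩; exact h (Prod.ext h1 h2.symm)
    by_cases h1 : p.1 = q.1
    · have h2 : ¬ q.2 = p.2 := fun h2 => this ⟨h1, h2⟩
      simp [h1, h2, h]
    · simp [h1, h]

lemma kd_scalar (z w : ℂ) (hz : z ≠ 0) (hw : w ≠ 0) :
    ((‖z / w‖ : ℂ))^2 * (starRingEnd ℂ) (w / z) = z / w := by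
  have hz' : (starRingEnd ℂ) z ≠ 0 := star_ne_zero.mpr hz
  have hw' : (starRingEnd ℂ) w ≠ 0 := star_ne_zero.mpr hw
  rw [← Complex.mul_conj', map_div₀, map_div₀]
  field_simp

/-- For a unitary U, the KD superoperator of U† is the inverse of
that of U, and (Ê_{U†})_{ij,kl} = |⟨b_j|a_i⟩/⟨b_l|a_k⟩|² conj((Ê_U)_{kl,ij}). -/
theorem kd_superoperator_inverse (d : ℕ)
    (a b : OrthonormalBasis (Fin d) ℂ (EuclideanSpace ℂ (Fin d)))
    (hab : ∀ i j, (inner ℂ (b j) (a i) : ℂ) ≠ 0)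
    (U : EuclideanSpace ℂ (Fin d) →ₗ[ℂ] EuclideanSpace ℂ (Fin d))
    (hU : (LinearMap.adjoint U) ∘ₗ U = LinearMap.id ∧
          U ∘ₗ (LinearMap.adjoint U) = LinearMap.id)
    (EU EUdag : Matrix (Fin d × Fin d) (Fin d × Fin d) ℂ)
    (hEU : ∀ p q, EU p q =
      ((inner ℂ (b p.2) (a p.1) : ℂ) / (inner ℂ (b q.2) (a q.1) : ℂ)) *
        (inner ℂ (a p.1) (U (a q.1)) : ℂ) *
        (inner ℂ (b q.2) ((LinearMap.adjoint U) (b p.2)) : ℂ))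
    (hEUdag : ∀ p q, EUdag p q =
      ((inner ℂ (b p.2) (a p.1) : ℂ) / (inner ℂ (b q.2) (a q.1) : ℂ)) *
        (inner ℂ (a p.1) ((LinearMap.adjoint U) (a q.1)) : ℂ) *
        (inner ℂ (b q.2) (U (b p.2)) : ℂ)) :
    EUdag * EU = 1 ∧ EU * EUdag = 1 ∧
    ∀ p q, EUdag p q =
      ((‖(inner ℂ (b p.2) (a p.1) : ℂ) / (inner ℂ (b q.2) (a q.1) : ℂ)‖ : ℂ))^2 *
        (starRingEnd ℂ) (EU q p) := by
  refine ⟨?_, ?_, ?_⟩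
  · ext p q
    rw [Matrix.mul_apply, Matrix.one_apply]
    simp_rw [hEU, hEUdag]
    exact kd_key d a b hab U hU.1 p q
  · ext p q
    rw [Matrix.mul_apply, Matrix.one_apply]
    simp_rw [hEU, hEUdag]
    have := kd_key d a b hab (LinearMap.adjoint U) (by rw [LinearMap.adjoint_adjoint]; exact hU.2) p q
    rw [LinearMap.adjoint_adjoint] at this
    exact this
  · intro p q
    rw [hEU, hEUdag, map_mul, map_mul]
    rw [inner_conj_symm, inner_conj_symm,
      ← LinearMap.adjoint_inner_right, LinearMap.adjoint_inner_left]
    rw [show ((‖(inner ℂ (b p.2) (a p.1) : ℂ) / (inner ℂ (b q.2) (a q.1) : ℂ)‖ : ℂ))^2 *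
        ((starRingEnd ℂ) ((inner ℂ (b q.2) (a q.1) : ℂ) / (inner ℂ (b p.2) (a p.1) : ℂ)) *
          (inner ℂ (a p.1) ((LinearMap.adjoint U) (a q.1)) : ℂ) *
          (inner ℂ (b q.2) (U (b p.2)) : ℂ))
      = (((‖(inner ℂ (b p.2) (a p.1) : ℂ) / (inner ℂ (b q.2) (a q.1) : ℂ)‖ : ℂ))^2 *
        (starRingEnd ℂ) ((inner ℂ (b q.2) (a q.1) : ℂ) / (inner ℂ (b p.2) (a p.1) : ℂ))) *
          (inner ℂ (a p.1) ((LinearMap.adjoint U) (a q.1)) : ℂ) *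
          (inner ℂ (b q.2) (U (b p.2)) : ℂ) by ring]
    rw [kd_scalar _ _ (hab p.1 p.2) (hab q.1 q.2)]
end

section
/- If the two bases are mutually unbiased (|⟨a_i|b_j⟩| = 1/√d for all i,j), then the Kirkwood-Dirac superoperator Ê_U of any unitary U is a unitary matrix on ℂ^{d²}. -/
open scoped InnerProductSpace

/-- If the bases are mutually unbiased (|⟨a_i|b_j⟩| = 1/√d), then
the KD superoperator Ê_U of any unitary U is a unitary d²×d² matrix. -/
theorem kd_superoperator_unitary_mub (d : ℕ)
    (a b : OrthonormalBasis (Fin d) ℂ (EuclideanSpace ℂ (Fin d)))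
    (hmub : ∀ i j, ‖(inner ℂ (a i) (b j) : ℂ)‖ = 1 / Real.sqrt d)
    (U : EuclideanSpace ℂ (Fin d) →ₗ[ℂ] EuclideanSpace ℂ (Fin d))
    (hU : (LinearMap.adjoint U) ∘ₗ U = LinearMap.id ∧
          U ∘ₗ (LinearMap.adjoint U) = LinearMap.id)
    (EU : Matrix (Fin d × Fin d) (Fin d × Fin d) ℂ)
    (hEU : ∀ p q, EU p q =
      ((inner ℂ (b p.2) (a p.1) : ℂ) / (inner ℂ (b q.2) (a q.1) : ℂ)) *
        (inner ℂ (a p.1) (U (a q.1)) : ℂ) *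
        (inner ℂ (b q.2) ((LinearMap.adjoint U) (b p.2)) : ℂ)) :
    EU ∈ Matrix.unitaryGroup (Fin d × Fin d) ℂ := by
  obtain ⟨hU1, _hU2⟩ := hU
  -- basic facts
  have hUinv : ∀ y, LinearMap.adjoint U (U y) = y := by
    intro y
    have := LinearMap.ext_iff.mp hU1 y
    simpa using this
  have hUU : ∀ x y : EuclideanSpace ℂ (Fin d), ⟪U x, U y⟫_ℂ = ⟪x, y⟫_ℂ := by
    intro x y
    rw [← LinearMap.adjoint_inner_right U, hUinv]
  -- the modulus-squared fact
  have hz : ∀ i j, (starRingEnd ℂ) (⟪b j, a i⟫_ℂ) * ⟪b j, a i⟫_ℂ = 1 / (d : ℂ) := by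
    intro i j
    rw [RCLike.conj_mul]
    have hnorm : ‖⟪b j, a i⟫_ℂ‖ = 1 / Real.sqrt d := by
      rw [← RCLike.norm_conj, inner_conj_symm]
      exact hmub i j
    rw [hnorm]
    norm_cast
    rw [div_pow, one_pow, Real.sq_sqrt (Nat.cast_nonneg d)]
    push_cast
    ring
  rw [Matrix.mem_unitaryGroup_iff']
  ext ⟨k, l⟩ ⟨k', l'⟩
  rw [Matrix.mul_apply]
  set C : ℂ := (1 / (d : ℂ)) /
      ((starRingEnd ℂ) (⟪b l, a k⟫_ℂ) * ⟪b l', a k'⟫_ℂ) with hC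
  have key : ∀ r : Fin d × Fin d,
      (star EU) (k, l) r * EU r (k', l') =
      C * (⟪U (a k), a r.1⟫_ℂ * ⟪a r.1, U (a k')⟫_ℂ) *
        (⟪U (b l'), b r.2⟫_ℂ * ⟪b r.2, U (b l)⟫_ℂ) := by
    rintro ⟨i, j⟩
    rw [Matrix.star_apply, hEU, hEU]
    simp only [Matrix.conjTranspose_apply]
    rw [show (star ((⟪b j, a i⟫_ℂ / ⟪b l, a k⟫_ℂ) * ⟪a i, U (a k)⟫_ℂ *
        ⟪b l, LinearMap.adjoint U (b j)⟫_ℂ) : ℂ) =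
        (starRingEnd ℂ) (⟪b j, a i⟫_ℂ) / (starRingEnd ℂ) (⟪b l, a k⟫_ℂ) *
        (starRingEnd ℂ) (⟪a i, U (a k)⟫_ℂ) *
        (starRingEnd ℂ) (⟪b l, LinearMap.adjoint U (b j)⟫_ℂ) by
      simp [map_mul, map_div₀]]
    rw [inner_conj_symm (U (a k)) (a i),
      inner_conj_symm (LinearMap.adjoint U (b j)) (b l),
      LinearMap.adjoint_inner_left, LinearMap.adjoint_inner_right]
    have := hz i j
    rw [hC]
    linear_combination (⟪U (a k), a i⟫_ℂ * ⟪a i, U (a k')⟫_ℂ *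
      ⟪U (b l'), b j⟫_ℂ * ⟪b j, U (b l)⟫_ℂ /
      ((starRingEnd ℂ) (⟪b l, a k⟫_ℂ) * ⟪b l', a k'⟫_ℂ)) * this
  rw [Finset.sum_congr rfl fun r _ => key r]
  rw [Fintype.sum_prod_type]
  have hjsum : ∀ i : Fin d,
      (∑ j : Fin d, C * (⟪U (a k), a i⟫_ℂ * ⟪a i, U (a k')⟫_ℂ) *
        (⟪U (b l'), b j⟫_ℂ * ⟪b j, U (b l)⟫_ℂ)) =
      C * (⟪U (a k), a i⟫_ℂ * ⟪a i, U (a k')⟫_ℂ) * ⟪U (b l'), U (b l)⟫_ℂ := by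
    intro i
    rw [← Finset.mul_sum, OrthonormalBasis.sum_inner_mul_inner]
  rw [Finset.sum_congr rfl fun i _ => hjsum i, ← Finset.sum_mul, ← Finset.mul_sum,
    OrthonormalBasis.sum_inner_mul_inner a (U (a k)) (U (a k'))]
  rw [hUU, hUU]
  rw [orthonormal_iff_ite.mp a.orthonormal, orthonormal_iff_ite.mp b.orthonormal]
  have hd : (d : ℂ) ≠ 0 := by
    have : 0 < d := Fin.pos k
    exact_mod_cast this.ne'
  rw [Matrix.one_apply]
  by_cases hk : k = k'
  · by_cases hl : l = l'
    · subst hk; subst hl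
      rw [if_pos rfl, if_pos rfl, if_pos rfl, mul_one, mul_one, hC, hz k l,
        div_self (one_div_ne_zero hd)]
    · simp [Prod.ext_iff, hl, Ne.symm hl]
  · simp [hk, Prod.ext_iff]
end

section
/- If a unitary U induces a Kirkwood-Dirac superoperator Ê_U (with respect to bases A, B with all mutual overlaps nonzero) that is a left stochastic matrix (entrywise real non-negative with unit column sums), then Ê_U is a permutation matrix. -/
open scoped InnerProductSpace ComplexConjugate

private lemma kd_aux_mul (β1 β2 β3 X1 Y1 X2 Y2 : ℂ) (h : β2 ≠ 0) :
    (β1 / β2 * X1 * Y1) * (β2 / β3 * X2 * Y2) = β1 / β3 * ((X1 * X2) * (Y2 * Y1)) := by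
  have hc : β2 * β2⁻¹ = 1 := mul_inv_cancel₀ h
  calc (β1 / β2 * X1 * Y1) * (β2 / β3 * X2 * Y2)
      = (β2 * β2⁻¹) * (β1 / β3 * ((X1 * X2) * (Y2 * Y1))) := by
        rw [div_eq_mul_inv, div_eq_mul_inv]; ring
    _ = _ := by rw [hc, one_mul]

private lemma kd_aux_conj (c e X Y : ℂ) (hc : c ≠ 0) (he : e ≠ 0) :
    c / e * X * Y =
      (c * (starRingEnd ℂ) c) / (e * (starRingEnd ℂ) e) *
        ((starRingEnd ℂ) e / (starRingEnd ℂ) c * X * Y) := by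
  have hc' : (starRingEnd ℂ) c ≠ 0 := by simpa using hc
  have he' : (starRingEnd ℂ) e ≠ 0 := by simpa using he
  field_simp

/-- If a unitary U induces a KD superoperator Ê_U that is a left
stochastic matrix, then Ê_U is a permutation matrix. -/
theorem kd_stochastic_implies_permutation (d : ℕ)
    (a b : OrthonormalBasis (Fin d) ℂ (EuclideanSpace ℂ (Fin d)))
    (hab : ∀ i j, (inner ℂ (b j) (a i) : ℂ) ≠ 0)
    (U : EuclideanSpace ℂ (Fin d) →ₗ[ℂ] EuclideanSpace ℂ (Fin d))
    (hU : (LinearMap.adjoint U) ∘ₗ U = LinearMap.id ∧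
          U ∘ₗ (LinearMap.adjoint U) = LinearMap.id)
    (EU : Matrix (Fin d × Fin d) (Fin d × Fin d) ℂ)
    (hEU : ∀ p q, EU p q =
      ((inner ℂ (b p.2) (a p.1) : ℂ) / (inner ℂ (b q.2) (a q.1) : ℂ)) *
        (inner ℂ (a p.1) (U (a q.1)) : ℂ) *
        (inner ℂ (b q.2) ((LinearMap.adjoint U) (b p.2)) : ℂ))
    (hreal : ∀ p q, (EU p q).im = 0 ∧ 0 ≤ (EU p q).re)
    (hcol : ∀ q, ∑ p, EU p q = 1) :
    ∃ π : Equiv.Perm (Fin d × Fin d),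
      ∀ p q, EU p q = if p = π q then 1 else 0 := by
  obtain ⟨hU1, hU2⟩ := hU
  have hUU : ∀ x y : EuclideanSpace ℂ (Fin d),
      (inner ℂ (U x) (U y) : ℂ) = inner ℂ x y := by
    intro x y
    rw [← LinearMap.adjoint_inner_right]
    have : (LinearMap.adjoint U) (U y) = y := by
      have := congrArg (fun T => T y) hU1; simpa using this
    rw [this]
  have hUUa : ∀ x y : EuclideanSpace ℂ (Fin d),
      (inner ℂ ((LinearMap.adjoint U) x) ((LinearMap.adjoint U) y) : ℂ) = inner ℂ x y := by
    intro x y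
    rw [LinearMap.adjoint_inner_left]
    have : U ((LinearMap.adjoint U) y) = y := by
      have := congrArg (fun T => T y) hU2; simpa using this
    rw [this]
  have hAortho : ∀ i j : Fin d, (inner ℂ (a i) (a j) : ℂ) = if i = j then 1 else 0 :=
    orthonormal_iff_ite.mp a.orthonormal
  have hBortho : ∀ i j : Fin d, (inner ℂ (b i) (b j) : ℂ) = if i = j then 1 else 0 :=
    orthonormal_iff_ite.mp b.orthonormal
  -- the inverse matrix F (= Ê_{U†})
  set F : Matrix (Fin d × Fin d) (Fin d × Fin d) ℂ := fun p q =>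
    ((inner ℂ (b p.2) (a p.1) : ℂ) / (inner ℂ (b q.2) (a q.1) : ℂ)) *
      (inner ℂ (a p.1) ((LinearMap.adjoint U) (a q.1)) : ℂ) *
      (inner ℂ (b q.2) (U (b p.2)) : ℂ) with hF
  -- helper for final ite juggling
  have hite : ∀ p q : Fin d × Fin d,
      ((inner ℂ (b p.2) (a p.1) : ℂ) / (inner ℂ (b q.2) (a q.1) : ℂ)) *
        ((if p.1 = q.1 then (1:ℂ) else 0) * (if q.2 = p.2 then (1:ℂ) else 0))
      = if p = q then 1 else 0 := by
    intro p q
    by_cases h1 : p.1 = q.1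
    · by_cases h2 : q.2 = p.2
      · have hpq : p = q := Prod.ext h1 h2.symm
        subst hpq
        simp only [eq_self_iff_true, if_true, mul_one]
        exact div_self (hab p.1 p.2)
      · have : p ≠ q := fun h => h2 (by rw [h])
        simp [h1, h2, this]
    · have : p ≠ q := fun h => h1 (by rw [h])
      simp [h1, this]
  -- F * E = 1
  have hFE : ∀ p q, (∑ r, F p r * EU r q) = if p = q then 1 else 0 := by
    intro p q
    have key : ∀ r : Fin d × Fin d, F p r * EU r q =
        ((inner ℂ (b p.2) (a p.1) : ℂ) / (inner ℂ (b q.2) (a q.1) : ℂ)) *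
        (((inner ℂ (U (a p.1)) (a r.1) : ℂ) * (inner ℂ (a r.1) (U (a q.1)) : ℂ)) *
         ((inner ℂ (U (b q.2)) (b r.2) : ℂ) * (inner ℂ (b r.2) (U (b p.2)) : ℂ))) := by
      intro r
      rw [hF]
      simp only []
      rw [hEU]
      rw [LinearMap.adjoint_inner_right, LinearMap.adjoint_inner_right]
      exact kd_aux_mul _ _ _ _ _ _ _ (hab r.1 r.2)
    rw [Finset.sum_congr rfl (fun r _ => key r), ← Finset.mul_sum]
    rw [Fintype.sum_prod_type]
    simp only [Prod.fst, Prod.snd]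
    rw [← Finset.sum_mul_sum]
    rw [a.sum_inner_mul_inner, b.sum_inner_mul_inner, hUU, hUU,
      hAortho, hBortho]
    exact hite p q
  -- E * F = 1
  have hEF : ∀ p q, (∑ r, EU p r * F r q) = if p = q then 1 else 0 := by
    intro p q
    have key : ∀ r : Fin d × Fin d, EU p r * F r q =
        ((inner ℂ (b p.2) (a p.1) : ℂ) / (inner ℂ (b q.2) (a q.1) : ℂ)) *
        (((inner ℂ ((LinearMap.adjoint U) (a p.1)) (a r.1) : ℂ) *
          (inner ℂ (a r.1) ((LinearMap.adjoint U) (a q.1)) : ℂ)) *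
         ((inner ℂ ((LinearMap.adjoint U) (b q.2)) (b r.2) : ℂ) *
          (inner ℂ (b r.2) ((LinearMap.adjoint U) (b p.2)) : ℂ))) := by
      intro r
      rw [hF]
      simp only []
      rw [hEU]
      rw [show (inner ℂ (a p.1) (U (a r.1)) : ℂ)
            = inner ℂ ((LinearMap.adjoint U) (a p.1)) (a r.1) from
          (LinearMap.adjoint_inner_left U (a r.1) (a p.1)).symm,
          show (inner ℂ (b q.2) (U (b r.2)) : ℂ)
            = inner ℂ ((LinearMap.adjoint U) (b q.2)) (b r.2) from
          (LinearMap.adjoint_inner_left U (b r.2) (b q.2)).symm]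
      exact kd_aux_mul _ _ _ _ _ _ _ (hab r.1 r.2)
    rw [Finset.sum_congr rfl (fun r _ => key r), ← Finset.mul_sum]
    rw [Fintype.sum_prod_type]
    simp only [Prod.fst, Prod.snd]
    rw [← Finset.sum_mul_sum]
    rw [a.sum_inner_mul_inner, b.sum_inner_mul_inner, hUUa, hUUa,
      hAortho, hBortho]
    exact hite p q
  -- F has real nonnegative entries
  have hconjE : ∀ p q : Fin d × Fin d, (starRingEnd ℂ) (EU p q) = EU p q := by
    intro p q
    exact Complex.conj_eq_iff_im.mpr (hreal p q).1
  have hFr : ∀ p q : Fin d × Fin d, F p q =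
      ((Complex.normSq (inner ℂ (b p.2) (a p.1)) /
        Complex.normSq (inner ℂ (b q.2) (a q.1)) : ℝ) : ℂ) * EU q p := by
    intro p q
    have h1 : (starRingEnd ℂ) (EU q p) =
        ((starRingEnd ℂ) (inner ℂ (b q.2) (a q.1) : ℂ) /
          (starRingEnd ℂ) (inner ℂ (b p.2) (a p.1) : ℂ)) *
        (inner ℂ (a p.1) ((LinearMap.adjoint U) (a q.1)) : ℂ) *
        (inner ℂ (b q.2) (U (b p.2)) : ℂ) := by
      rw [hEU]
      simp only [map_mul, map_div₀]
      congr 1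
      · congr 1
        rw [inner_conj_symm]
        rw [LinearMap.adjoint_inner_right]
      · rw [inner_conj_symm]
        exact LinearMap.adjoint_inner_left U (b p.2) (b q.2)
    have hcast : ((Complex.normSq (inner ℂ (b p.2) (a p.1)) /
        Complex.normSq (inner ℂ (b q.2) (a q.1)) : ℝ) : ℂ)
        = ((inner ℂ (b p.2) (a p.1) : ℂ) * (starRingEnd ℂ) (inner ℂ (b p.2) (a p.1) : ℂ)) /
          ((inner ℂ (b q.2) (a q.1) : ℂ) * (starRingEnd ℂ) (inner ℂ (b q.2) (a q.1) : ℂ)) := by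
      rw [Complex.mul_conj, Complex.mul_conj]
      push_cast
      ring
    rw [← hconjE q p, h1, hcast, hF]
    simp only []
    exact kd_aux_conj _ _ _ _ (hab p.1 p.2) (hab q.1 q.2)
  have hFreal : ∀ p q : Fin d × Fin d, (F p q).im = 0 ∧ 0 ≤ (F p q).re := by
    intro p q
    rw [hFr p q]
    have hr : (0:ℝ) ≤ Complex.normSq (inner ℂ (b p.2) (a p.1)) /
        Complex.normSq (inner ℂ (b q.2) (a q.1)) :=
      div_nonneg (Complex.normSq_nonneg _) (Complex.normSq_nonneg _)
    constructor
    · rw [Complex.mul_im]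
      simp [(hreal q p).1]
    · rw [Complex.mul_re]
      simp only [Complex.ofReal_re, Complex.ofReal_im, zero_mul, sub_zero]
      exact mul_nonneg hr (hreal q p).2
  -- column sums of F are 1
  have hFcol : ∀ k, (∑ j, F j k) = 1 := by
    intro k
    have : (∑ j, F j k) = ∑ j, (∑ p, EU p j) * F j k := by
      apply Finset.sum_congr rfl
      intro j _
      rw [hcol j, one_mul]
    rw [this]
    simp_rw [Finset.sum_mul]
    rw [Finset.sum_comm]
    simp_rw [hEF]
    simp
  -- real-part versions of the matrix identities
  have hreE : ∀ p q : Fin d × Fin d, EU p q = (((EU p q).re : ℝ) : ℂ) := by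
    intro p q
    exact (Complex.ext (by simp) (by simp [(hreal p q).1])).symm
  have hreF : ∀ p q : Fin d × Fin d, F p q = (((F p q).re : ℝ) : ℂ) := by
    intro p q
    exact (Complex.ext (by simp) (by simp [(hFreal p q).1])).symm
  have hmul_re : ∀ p q r : Fin d × Fin d,
      (F p q * EU q r).re = (F p q).re * (EU q r).re := by
    intro p q r
    rw [Complex.mul_re, (hreal q r).1, (hFreal p q).1]
    ring
  -- for every column q there is a designated row σ q with column q = e_{σ q}
  have hcolE : ∀ q : Fin d × Fin d, ∃ k : Fin d × Fin d,
      ∀ i, EU i q = if i = k then 1 else 0 := by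
    intro q
    -- find a nonzero entry in column q
    have hex : ∃ k, (EU k q).re ≠ 0 := by
      by_contra hc
      push_neg at hc
      have : (∑ p, EU p q) = 0 := by
        apply Finset.sum_eq_zero
        intro p _
        rw [hreE p q, hc p]
        simp
      rw [hcol q] at this
      exact one_ne_zero this
    obtain ⟨k, hk⟩ := hex
    -- F i k = 0 for i ≠ q
    have hFzero : ∀ i, i ≠ q → F i k = 0 := by
      intro i hi
      have h0 : (∑ r, F i r * EU r q) = 0 := by
        rw [hFE i q, if_neg hi]
      have h0re : (∑ r, (F i r).re * (EU r q).re) = 0 := by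
        have := congrArg Complex.re h0
        rw [Complex.re_sum] at this
        simpa [hmul_re] using this
      have hterm : ∀ r ∈ Finset.univ, (0:ℝ) ≤ (F i r).re * (EU r q).re :=
        fun r _ => mul_nonneg (hFreal i r).2 (hreal r q).2
      have := (Finset.sum_eq_zero_iff_of_nonneg hterm).mp h0re k (Finset.mem_univ k)
      have hFre : (F i k).re = 0 := by
        rcases mul_eq_zero.mp this with h | h
        · exact h
        · exact absurd h hk
      rw [hreF i k, hFre]
      simp
    -- F q k = 1
    have hFone : F q k = 1 := by
      have := hFcol k
      rwa [Finset.sum_eq_single q (fun j _ hj => hFzero j hj) (by simp)] at this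
    -- column q of EU equals e_k
    refine ⟨k, fun i => ?_⟩
    have h1 : (∑ r, EU i r * F r k) = if i = k then 1 else 0 := hEF i k
    rw [Finset.sum_eq_single q
      (fun j _ hj => by rw [hFzero j hj, mul_zero]) (by simp)] at h1
    rwa [hFone, mul_one] at h1
  choose σ hσ using hcolE
  -- σ is injective
  have hinj : Function.Injective σ := by
    intro q q' hqq'
    by_contra hne
    have h0 : (∑ r, F q r * EU r q') = 0 := by
      rw [hFE q q', if_neg hne]
    have h1 : (∑ r, F q r * EU r q') = 1 := by
      have : ∀ r, EU r q' = EU r q := by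
        intro r
        rw [hσ q' r, hσ q r, hqq']
      simp_rw [this]
      rw [hFE q q, if_pos rfl]
    rw [h1] at h0
    exact one_ne_zero h0
  have hbij : Function.Bijective σ := Finite.injective_iff_bijective.mp hinj
  exact ⟨Equiv.ofBijective σ hbij, fun p q => hσ q p⟩
end

section
/- A generalized permutation unitary (one acting as U|a_i⟩ = e^{iθ_i}|a_{σ(i)}⟩ and U|b_j⟩ = e^{iφ_j}|b_{τ(j)}⟩) preserves Kirkwood-Dirac positivity: if Q_{ij}(ρ) is real non-negative for all i,j, then so is Q_{ij}(UρU†). -/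
/-- A generalized permutation unitary preserves KD positivity:
if Q_{ij}(ρ) is real non-negative for all i,j, so is Q_{ij}(UρU†). -/
theorem kd_generalized_permutation_preserves_positivity (d : ℕ)
    (a b : OrthonormalBasis (Fin d) ℂ (EuclideanSpace ℂ (Fin d)))
    (U ρ : EuclideanSpace ℂ (Fin d) →ₗ[ℂ] EuclideanSpace ℂ (Fin d))
    (hU : (LinearMap.adjoint U) ∘ₗ U = LinearMap.id ∧
          U ∘ₗ (LinearMap.adjoint U) = LinearMap.id)
    (σ τ : Equiv.Perm (Fin d)) (θ φ : Fin d → ℝ)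
    (hUa : ∀ i, U (a i) = Complex.exp (θ i * Complex.I) • a (σ i))
    (hUb : ∀ j, U (b j) = Complex.exp (φ j * Complex.I) • b (τ j))
    (hQpos : ∀ i j,
      ((inner ℂ (b j) (a i) : ℂ) * (inner ℂ (a i) (ρ (b j)) : ℂ)).im = 0 ∧
      0 ≤ ((inner ℂ (b j) (a i) : ℂ) * (inner ℂ (a i) (ρ (b j)) : ℂ)).re) :
    ∀ i j,
      ((inner ℂ (b j) (a i) : ℂ) *
        (inner ℂ (a i) (U (ρ ((LinearMap.adjoint U) (b j)))) : ℂ)).im = 0 ∧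
      0 ≤ ((inner ℂ (b j) (a i) : ℂ) *
        (inner ℂ (a i) (U (ρ ((LinearMap.adjoint U) (b j)))) : ℂ)).re := by
  obtain ⟨hU1, hU2⟩ := hU
  intro i j
  set i' := σ.symm i with hi'
  set j' := τ.symm j with hj'
  have hUinj : Function.Injective U := by
    intro x y h
    have h2 := congrArg (LinearMap.adjoint U) h
    have hx := LinearMap.ext_iff.mp hU1 x
    have hy := LinearMap.ext_iff.mp hU1 y
    simp only [LinearMap.comp_apply, LinearMap.id_apply] at hx hy
    rw [← hx, ← hy, h2]
  have hUadj : ∀ x, U ((LinearMap.adjoint U) x) = x := by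
    intro x
    have := LinearMap.ext_iff.mp hU2 x
    simpa only [LinearMap.comp_apply, LinearMap.id_apply] using this
  have hadj_b : (LinearMap.adjoint U) (b j) =
      Complex.exp (-(φ j') * Complex.I) • b j' := by
    apply hUinj
    rw [hUadj, map_smul, hUb j', smul_smul, ← Complex.exp_add, Equiv.apply_symm_apply]
    have : (-(φ j' : ℂ) * Complex.I + (φ j' : ℂ) * Complex.I) = 0 := by ring
    rw [this, Complex.exp_zero, one_smul]
  have hadj_a : (LinearMap.adjoint U) (a i) =
      Complex.exp (-(θ i') * Complex.I) • a i' := by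
    apply hUinj
    rw [hUadj, map_smul, hUa i', smul_smul, ← Complex.exp_add, Equiv.apply_symm_apply]
    have : (-(θ i' : ℂ) * Complex.I + (θ i' : ℂ) * Complex.I) = 0 := by ring
    rw [this, Complex.exp_zero, one_smul]
  have h2 : (inner ℂ (a i) (U (ρ ((LinearMap.adjoint U) (b j)))) : ℂ) =
      Complex.exp ((θ i') * Complex.I) * Complex.exp (-(φ j') * Complex.I) *
        (inner ℂ (a i') (ρ (b j')) : ℂ) := by
    rw [← LinearMap.adjoint_inner_left, hadj_a, hadj_b, map_smul,
      inner_smul_left, inner_smul_right, ← Complex.exp_conj]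
    have hc : (starRingEnd ℂ) (-(θ i' : ℂ) * Complex.I) = (θ i' : ℂ) * Complex.I := by
      simp [map_mul, Complex.conj_I, Complex.conj_ofReal]
    rw [hc]; ring
  have h1 : (inner ℂ (b j) (a i) : ℂ) =
      Complex.exp ((φ j') * Complex.I) * Complex.exp (-(θ i') * Complex.I) *
        (inner ℂ (b j') (a i') : ℂ) := by
    have ha : a i = Complex.exp (-(θ i') * Complex.I) • U (a i') := by
      rw [hUa i', smul_smul, ← Complex.exp_add, Equiv.apply_symm_apply]
      have : (-(θ i' : ℂ) * Complex.I + (θ i' : ℂ) * Complex.I) = 0 := by ring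
      rw [this, Complex.exp_zero, one_smul]
    have hb : b j = Complex.exp (-(φ j') * Complex.I) • U (b j') := by
      rw [hUb j', smul_smul, ← Complex.exp_add, Equiv.apply_symm_apply]
      have : (-(φ j' : ℂ) * Complex.I + (φ j' : ℂ) * Complex.I) = 0 := by ring
      rw [this, Complex.exp_zero, one_smul]
    have hin : (inner ℂ (U (b j')) (U (a i')) : ℂ) = inner ℂ (b j') (a i') := by
      rw [← LinearMap.adjoint_inner_left]
      have := LinearMap.ext_iff.mp hU1 (b j')
      simp only [LinearMap.comp_apply, LinearMap.id_apply] at this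
      rw [this]
    conv_lhs => rw [ha, hb]
    rw [inner_smul_left, inner_smul_right, hin, ← Complex.exp_conj]
    have hc : (starRingEnd ℂ) (-(φ j' : ℂ) * Complex.I) = (φ j' : ℂ) * Complex.I := by
      simp [map_mul, Complex.conj_I, Complex.conj_ofReal]
    rw [hc]; ring
  have key : (inner ℂ (b j) (a i) : ℂ) *
      (inner ℂ (a i) (U (ρ ((LinearMap.adjoint U) (b j)))) : ℂ) =
      (inner ℂ (b j') (a i') : ℂ) * (inner ℂ (a i') (ρ (b j')) : ℂ) := by
    rw [h1, h2]
    have h3 : Complex.exp ((φ j') * Complex.I) * Complex.exp (-(θ i') * Complex.I) *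
        (Complex.exp ((θ i') * Complex.I) * Complex.exp (-(φ j') * Complex.I)) = 1 := by
      rw [← Complex.exp_add, ← Complex.exp_add, ← Complex.exp_add]
      have : ((φ j' : ℂ) * Complex.I + -(θ i') * Complex.I +
          ((θ i' : ℂ) * Complex.I + -(φ j') * Complex.I)) = 0 := by ring
      rw [this, Complex.exp_zero]
    linear_combination ((inner ℂ (b j') (a i') : ℂ) * (inner ℂ (a i') (ρ (b j')) : ℂ)) * h3
  rw [key]
  exact hQpos i' j'
end

section
/- Hermiticity of ρ imposes the constraints Q_{uv}(ρ) = ∑_{i,j} (⟨a_i|b_v⟩⟨b_v|a_u⟩⟨a_u|b_j⟩ / ⟨a_i|b_j⟩) · conj(Q_{ij}(ρ)) on any informationally complete Kirkwood-Dirac distribution of a Hermitian operator. -/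
/-- Hermiticity of ρ imposes the constraints
Q_{uv} = ∑_{i,j} (⟨a_i|b_v⟩⟨b_v|a_u⟩⟨a_u|b_j⟩/⟨a_i|b_j⟩) conj(Q_{ij}). -/
theorem kd_hermiticity_constraints (d : ℕ)
    (a b : OrthonormalBasis (Fin d) ℂ (EuclideanSpace ℂ (Fin d)))
    (hab : ∀ i j, (inner ℂ (a i) (b j) : ℂ) ≠ 0)
    (ρ : EuclideanSpace ℂ (Fin d) →ₗ[ℂ] EuclideanSpace ℂ (Fin d))
    (hρ : LinearMap.adjoint ρ = ρ) :
    ∀ u v : Fin d,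
      (inner ℂ (b v) (a u) : ℂ) * (inner ℂ (a u) (ρ (b v)) : ℂ)
      = ∑ i, ∑ j,
          ((inner ℂ (a i) (b v) : ℂ) * (inner ℂ (b v) (a u) : ℂ) *
            (inner ℂ (a u) (b j) : ℂ) / (inner ℂ (a i) (b j) : ℂ)) *
          (starRingEnd ℂ)
            ((inner ℂ (b j) (a i) : ℂ) * (inner ℂ (a i) (ρ (b j)) : ℂ)) := by
  intro u v
  have H : ∀ i j : Fin d,
      ((inner ℂ (a i) (b v) : ℂ) * (inner ℂ (b v) (a u) : ℂ) *
        (inner ℂ (a u) (b j) : ℂ) / (inner ℂ (a i) (b j) : ℂ)) *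
      (starRingEnd ℂ)
        ((inner ℂ (b j) (a i) : ℂ) * (inner ℂ (a i) (ρ (b j)) : ℂ))
      = (inner ℂ (a i) (b v) : ℂ) * (inner ℂ (b v) (a u) : ℂ) *
        ((inner ℂ (a u) (b j) : ℂ) * (inner ℂ (b j) (ρ (a i)) : ℂ)) := by
    intro i j
    have h1 : (starRingEnd ℂ) ((inner ℂ (a i) (ρ (b j)) : ℂ))
        = (inner ℂ (b j) (ρ (a i)) : ℂ) := by
      rw [inner_conj_symm]
      conv_lhs => rw [← hρ]
      rw [LinearMap.adjoint_inner_left]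
    have h2 : (starRingEnd ℂ) ((inner ℂ (b j) (a i) : ℂ))
        = (inner ℂ (a i) (b j) : ℂ) := inner_conj_symm _ _
    rw [map_mul, h1, h2, div_mul_eq_mul_div, mul_div_assoc,
      mul_comm ((inner ℂ (a i) (b j) : ℂ)) ((inner ℂ (b j) (ρ (a i)) : ℂ)),
      mul_div_assoc, div_self (hab i j), mul_one]
    ring
  rw [Finset.sum_congr rfl (fun i _ => Finset.sum_congr rfl (fun j _ => H i j))]
  have hj : ∀ i : Fin d,
      ∑ j, (inner ℂ (a u) (b j) : ℂ) * (inner ℂ (b j) (ρ (a i)) : ℂ)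
        = (inner ℂ (a u) (ρ (a i)) : ℂ) := fun i => b.sum_inner_mul_inner _ _
  simp_rw [← Finset.mul_sum, hj]
  have hi : ∀ i : Fin d, (inner ℂ (a u) (ρ (a i)) : ℂ)
      = (inner ℂ (ρ (a u)) (a i) : ℂ) := by
    intro i
    conv_lhs => rw [← hρ]
    rw [LinearMap.adjoint_inner_right]
  simp_rw [hi]
  have : ∑ i, (inner ℂ (a i) (b v) : ℂ) * (inner ℂ (b v) (a u) : ℂ) *
      (inner ℂ (ρ (a u)) (a i) : ℂ)
      = (inner ℂ (b v) (a u) : ℂ) *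
        ∑ i, (inner ℂ (ρ (a u)) (a i) : ℂ) * (inner ℂ (a i) (b v) : ℂ) := by
    rw [Finset.mul_sum]; exact Finset.sum_congr rfl fun i _ => by ring
  rw [this, a.sum_inner_mul_inner]
  conv_rhs => rw [← hρ]
  rw [LinearMap.adjoint_inner_left]
end

section
/- For a single qudit of dimension d with B the discrete Fourier transform of the computational basis A (so ⟨a|b⟩ entries are d^{-1/2}ω^{ab}, ω = e^{2πi/d}), the discrete Fourier transform Q̂(x,y) = ∑_{a,b∈ℤ_d} ω^{-ax-by} Q(a,b) of the KD distribution of a Hermitian ρ satisfies the self-similarity relation Q̂(d−x, d−y) = ω^{xy} · conj(Q̂(x,y)) (indices mod d). -/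
section Aux

variable {d : ℕ} [NeZero d] {ω : ℂ}

lemma aux_pow_mod (h1 : ω ^ d = 1) (n : ℕ) : ω ^ (n % d) = ω ^ n := by
  conv_rhs => rw [← Nat.mod_add_div n d, pow_add, pow_mul, h1, one_pow, mul_one]

lemma aux_e_add (h1 : ω ^ d = 1) (z w : ZMod d) :
    ω ^ (z + w).val = ω ^ z.val * ω ^ w.val := by
  rw [ZMod.val_add, aux_pow_mod h1, pow_add]

lemma aux_e_mul (h1 : ω ^ d = 1) (z w : ZMod d) :
    ω ^ (z * w).val = (ω ^ z.val) ^ w.val := by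
  rw [ZMod.val_mul, aux_pow_mod h1, pow_mul]

lemma aux_e_inv (h1 : ω ^ d = 1) (z : ZMod d) :
    (ω ^ z.val)⁻¹ = ω ^ (-z).val := by
  refine inv_eq_of_mul_eq_one_right ?_
  rw [← aux_e_add h1, add_neg_cancel, ZMod.val_zero, pow_zero]

lemma aux_sum_val (f : ℕ → ℂ) : ∑ b : ZMod d, f b.val = ∑ i ∈ Finset.range d, f i := by
  refine Finset.sum_nbij' (fun b => b.val) (fun i => (i : ZMod d)) ?_ ?_ ?_ ?_ ?_
  · intro b _; exact Finset.mem_range.mpr (ZMod.val_lt b)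
  · intro i _; exact Finset.mem_univ _
  · intro b _; exact ZMod.natCast_rightInverse b
  · intro i hi; exact ZMod.val_cast_of_lt (Finset.mem_range.mp hi)
  · intro b _; rfl

lemma aux_orth (hprim : IsPrimitiveRoot ω d) (c : ZMod d) :
    ∑ b : ZMod d, ω ^ (b * c).val = if c = 0 then (d : ℂ) else 0 := by
  have h1 : ω ^ d = 1 := hprim.pow_eq_one
  split_ifs with hc
  · subst hc
    simp [ZMod.card d]
  · have hrw : ∀ b : ZMod d, ω ^ (b * c).val = (ω ^ c.val) ^ b.val := by
      intro b; rw [mul_comm, aux_e_mul h1]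
    simp_rw [hrw]
    rw [aux_sum_val (fun i => (ω ^ c.val) ^ i)]
    have hne : (ω ^ c.val) ≠ 1 :=
      hprim.pow_ne_one_of_pos_of_lt (fun h => hc ((ZMod.val_eq_zero c).mp h))
        (ZMod.val_lt c)
    rw [geom_sum_eq hne]
    rw [← pow_mul, mul_comm c.val d, pow_mul, h1, one_pow, sub_self, zero_div]

end Aux

/-- For a qudit with B the Fourier basis, the DFT of the KD
distribution of a Hermitian ρ satisfies the self-similarity relation
Q̂(d−x, d−y) = ω^{xy} conj(Q̂(x,y)) (indices mod d, so d−x is −x in ZMod d). -/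
theorem kd_dft_self_similarity (d : ℕ) [NeZero d]
    (ω : ℂ) (hω : ω = Complex.exp (2 * Real.pi * Complex.I / d))
    (ρ : Matrix (ZMod d) (ZMod d) ℂ) (hρ : ρ.IsHermitian)
    (bvec : ZMod d → ZMod d → ℂ)
    (hb : ∀ j k, bvec j k = ((Real.sqrt d : ℂ))⁻¹ * ω ^ ((k * j : ZMod d)).val)
    (Q : ZMod d → ZMod d → ℂ)
    (hQ : ∀ i j, Q i j = star (bvec j i) * ∑ k, ρ i k * bvec j k)
    (Qhat : ZMod d → ZMod d → ℂ)
    (hQhat : ∀ x y, Qhat x y = ∑ a : ZMod d, ∑ b : ZMod d,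
      (ω ^ ((a * x + b * y : ZMod d)).val)⁻¹ * Q a b) :
    ∀ x y : ZMod d,
      Qhat (-x) (-y) = ω ^ ((x * y : ZMod d)).val * star (Qhat x y) := by
  have hd0 : (d : ℂ) ≠ 0 := Nat.cast_ne_zero.mpr (NeZero.ne d)
  have hprim : IsPrimitiveRoot ω d := hω ▸ Complex.isPrimitiveRoot_exp d (NeZero.ne d)
  have h1 : ω ^ d = 1 := hprim.pow_eq_one
  have hstar : ∀ z : ZMod d, star (ω ^ z.val) = ω ^ (-z).val := by
    intro z
    rw [← aux_e_inv h1]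
    have habs : ‖ω‖ = 1 := by
      rw [hω]
      rw [Complex.norm_exp]
      have : (2 * (Real.pi : ℂ) * Complex.I / d).re = 0 := by
        have : (2 * (Real.pi : ℂ) * Complex.I / d) = ((2 * Real.pi / d : ℝ) : ℂ) * Complex.I := by
          push_cast; ring
        rw [this]; simp
      rw [this, Real.exp_zero]
    have : star ω = ω⁻¹ := by
      rw [Complex.star_def, Complex.inv_def, Complex.normSq_eq_norm_sq, habs]
      simp
    rw [star_pow, this, inv_pow]
  have hs2 : ((Real.sqrt d : ℂ))⁻¹ * ((Real.sqrt d : ℂ))⁻¹ = (d : ℂ)⁻¹ := by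
    rw [← mul_inv]
    congr 1
    rw [← Complex.ofReal_mul, ← Real.sqrt_mul_self (Nat.cast_nonneg d)]
    norm_num
  -- closed form for Qhat
  have key : ∀ x y : ZMod d, Qhat x y = ∑ a : ZMod d, ω ^ ((-(a * x) : ZMod d)).val * ρ a (a + y) := by
    intro x y
    rw [hQhat]
    refine Finset.sum_congr rfl (fun a _ => ?_)
    have step1 : ∀ b : ZMod d, (ω ^ ((a * x + b * y : ZMod d)).val)⁻¹ * Q a b
        = (d : ℂ)⁻¹ * (ω ^ ((-(a * x) : ZMod d)).val *
            ∑ k, ρ a k * ω ^ ((b * (k - a - y) : ZMod d)).val) := by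
      intro b
      rw [hQ]
      have hsb : star (bvec b a) = ((Real.sqrt d : ℂ))⁻¹ * ω ^ ((-(a * b) : ZMod d)).val := by
        rw [hb, star_mul', hstar, star_inv₀]
        congr 1
        rw [Complex.star_def, Complex.conj_ofReal]
      rw [hsb]
      simp_rw [hb b]
      have e1 : (ω ^ ((a * x + b * y : ZMod d)).val)⁻¹ = ω ^ ((-(a*x) : ZMod d)).val * ω ^ ((-(b*y) : ZMod d)).val := by
        rw [aux_e_inv h1, neg_add, aux_e_add h1]
      rw [e1]
      simp only [Finset.mul_sum]
      refine Finset.sum_congr rfl (fun k _ => ?_)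
      have e2 : ω ^ ((-(b*y) : ZMod d)).val * ω ^ ((-(a*b) : ZMod d)).val * ω ^ ((k*b : ZMod d)).val
          = ω ^ ((b * (k - a - y) : ZMod d)).val := by
        rw [← aux_e_add h1, ← aux_e_add h1]
        congr 1
        ring
      rw [← e2, ← hs2]
      ring
    simp_rw [step1]
    rw [← Finset.mul_sum, ← Finset.mul_sum, Finset.sum_comm]
    have collapse : ∀ k : ZMod d, ∑ b : ZMod d, ρ a k * ω ^ ((b * (k - a - y) : ZMod d)).val
        = ρ a k * (if k - a - y = 0 then (d : ℂ) else 0) := by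
      intro k
      rw [← Finset.mul_sum, aux_orth hprim]
    simp_rw [collapse]
    have hcond : ∀ k : ZMod d, (k - a - y = 0) ↔ (k = a + y) := by
      intro k; rw [sub_sub, sub_eq_zero]
    simp_rw [mul_ite, mul_zero, hcond]
    rw [Finset.sum_ite_eq' Finset.univ (a + y) (fun k => ρ a k * (d : ℂ))]
    simp only [Finset.mem_univ, if_true]
    field_simp
  intro x y
  rw [key, key, star_sum, Finset.mul_sum]
  refine Fintype.sum_equiv (Equiv.subRight y) _ _ (fun c => ?_)
  show ω ^ ((-(c * -x) : ZMod d)).val * ρ c (c + -y)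
      = ω ^ ((x * y : ZMod d)).val * star (ω ^ ((-((c - y) * x) : ZMod d)).val * ρ (c - y) (c - y + y))
  rw [star_mul', hstar, neg_neg, sub_add_cancel]
  have hherm : star (ρ (c - y) c) = ρ c (c - y) := by
    rw [hρ.apply c (c - y)]
  rw [hherm, ← mul_assoc, ← aux_e_add h1]
  have harg1 : (-(c * -x) : ZMod d) = c * x := by ring
  have harg2 : (x * y + (c - y) * x : ZMod d) = c * x := by ring
  rw [harg1, harg2, ← sub_eq_add_neg]
end

section
/- For any pure state |ψ⟩, each Kirkwood-Dirac quasiprobability satisfies |Q_{ij}(ψ)| ≤ M³ √(n_A n_B), where M = max_{i,j}|⟨a_i|b_j⟩| and n_A, n_B are the numbers of basis vectors of A and B not orthogonal to |ψ⟩. -/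
open Finset in
lemma kd_aux (d : ℕ) (c : OrthonormalBasis (Fin d) ℂ (EuclideanSpace ℂ (Fin d)))
    (ψ v : EuclideanSpace ℂ (Fin d)) (hψ : ‖ψ‖ = 1) (M : ℝ)
    (hM0 : 0 ≤ M) (hM : ∀ j, ‖(inner ℂ v (c j) : ℂ)‖ ≤ M) :
    ‖(inner ℂ v ψ : ℂ)‖ ≤ M *
      Real.sqrt ((Finset.univ.filter fun j => (inner ℂ (c j) ψ : ℂ) ≠ 0).card) := by
  set S := Finset.univ.filter fun j => (inner ℂ (c j) ψ : ℂ) ≠ 0 with hS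
  have hrepr : ∀ j, (c.repr ψ) j = (inner ℂ (c j) ψ : ℂ) := fun j =>
    c.repr_apply_apply ψ j
  have hsum2 : ∑ j, ‖(inner ℂ (c j) ψ : ℂ)‖ ^ 2 = 1 := by
    have h1 : ‖c.repr ψ‖ = 1 := by rw [c.repr.norm_map]; exact hψ
    have h2 : ‖c.repr ψ‖ ^ 2 = ∑ j, ‖(c.repr ψ) j‖ ^ 2 := by
      rw [EuclideanSpace.norm_eq, Real.sq_sqrt (by positivity)]
    simp only [hrepr] at h2
    rw [← h2, h1, one_pow]
  have hexp : (inner ℂ v ψ : ℂ) = ∑ j ∈ S, (inner ℂ v (c j) : ℂ) * (inner ℂ (c j) ψ : ℂ) := by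
    rw [← c.sum_inner_mul_inner v ψ]
    refine (Finset.sum_subset (Finset.subset_univ S) ?_).symm
    intro j _ hj
    simp only [hS, Finset.mem_filter, Finset.mem_univ, true_and, not_not] at hj
    rw [hj, mul_zero]
  calc ‖(inner ℂ v ψ : ℂ)‖ ≤ ∑ j ∈ S, ‖(inner ℂ v (c j) : ℂ) * (inner ℂ (c j) ψ : ℂ)‖ := by
        rw [hexp]; exact norm_sum_le _ _
    _ ≤ ∑ j ∈ S, M * ‖(inner ℂ (c j) ψ : ℂ)‖ := by
        refine Finset.sum_le_sum fun j _ => ?_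
        rw [norm_mul]
        exact mul_le_mul_of_nonneg_right (hM j) (norm_nonneg _)
    _ = M * ∑ j ∈ S, ‖(inner ℂ (c j) ψ : ℂ)‖ := by rw [Finset.mul_sum]
    _ ≤ M * Real.sqrt (S.card) := by
        refine mul_le_mul_of_nonneg_left ?_ hM0
        have hcs : (∑ j ∈ S, ‖(inner ℂ (c j) ψ : ℂ)‖) ^ 2 ≤
            S.card * ∑ j ∈ S, ‖(inner ℂ (c j) ψ : ℂ)‖ ^ 2 := sq_sum_le_card_mul_sum_sq
        have hle1 : ∑ j ∈ S, ‖(inner ℂ (c j) ψ : ℂ)‖ ^ 2 ≤ 1 := by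
          rw [← hsum2]
          exact Finset.sum_le_sum_of_subset_of_nonneg (Finset.subset_univ S)
            (fun _ _ _ => by positivity)
        have h2 : (∑ j ∈ S, ‖(inner ℂ (c j) ψ : ℂ)‖) ^ 2 ≤ (S.card : ℝ) := by
          calc (∑ j ∈ S, ‖(inner ℂ (c j) ψ : ℂ)‖) ^ 2 ≤
              S.card * ∑ j ∈ S, ‖(inner ℂ (c j) ψ : ℂ)‖ ^ 2 := hcs
            _ ≤ S.card * 1 := by
                exact mul_le_mul_of_nonneg_left hle1 (Nat.cast_nonneg _)
            _ = S.card := mul_one _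
        have := Real.sqrt_le_sqrt h2
        rwa [Real.sqrt_sq (Finset.sum_nonneg fun _ _ => norm_nonneg _)] at this

/-- For any pure state ψ, each KD quasiprobability satisfies
|Q_{ij}(ψ)| ≤ M³ √(n_A n_B), with M = max_{ij}|⟨a_i|b_j⟩| and n_A, n_B the
support uncertainties of ψ. -/
theorem kd_magnitude_bound (d : ℕ)
    (a b : OrthonormalBasis (Fin d) ℂ (EuclideanSpace ℂ (Fin d)))
    (ψ : EuclideanSpace ℂ (Fin d)) (hψ : ‖ψ‖ = 1)
    (M : ℝ)
    (hM : IsGreatest {x : ℝ | ∃ i j, x = ‖(inner ℂ (a i) (b j) : ℂ)‖} M)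
    (nA nB : ℕ)
    (hnA : nA = (Finset.univ.filter fun i => (inner ℂ (a i) ψ : ℂ) ≠ 0).card)
    (hnB : nB = (Finset.univ.filter fun j => (inner ℂ (b j) ψ : ℂ) ≠ 0).card) :
    ∀ i j,
      ‖(inner ℂ (b j) (a i) : ℂ) * (inner ℂ (a i) ψ : ℂ) * (inner ℂ ψ (b j) : ℂ)‖
        ≤ M ^ 3 * Real.sqrt (nA * nB) := by
  intro i j
  have hMub : ∀ i j, ‖(inner ℂ (a i) (b j) : ℂ)‖ ≤ M := fun i j => hM.2 ⟨i, j, rfl⟩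
  have hM0 : 0 ≤ M := by obtain ⟨i0, j0, h⟩ := hM.1; rw [h]; exact norm_nonneg _
  -- d could be 0? Fin 0 has no elements, but ∀ i j with i j : Fin d, so if d = 0 vacuous.
  have h1 : ‖(inner ℂ (a i) ψ : ℂ)‖ ≤ M * Real.sqrt nB := by
    rw [hnB]
    exact kd_aux d b ψ (a i) hψ M hM0 (fun j' => hMub i j')
  have h2 : ‖(inner ℂ ψ (b j) : ℂ)‖ ≤ M * Real.sqrt nA := by
    rw [hnA, norm_inner_symm]
    refine kd_aux d a ψ (b j) hψ M hM0 (fun i' => ?_)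
    rw [norm_inner_symm]
    exact hMub i' j
  have h3 : ‖(inner ℂ (b j) (a i) : ℂ)‖ ≤ M := by
    rw [norm_inner_symm]; exact hMub i j
  calc ‖(inner ℂ (b j) (a i) : ℂ) * (inner ℂ (a i) ψ : ℂ) * (inner ℂ ψ (b j) : ℂ)‖
      = ‖(inner ℂ (b j) (a i) : ℂ)‖ * ‖(inner ℂ (a i) ψ : ℂ)‖ * ‖(inner ℂ ψ (b j) : ℂ)‖ := by
        rw [norm_mul, norm_mul]
    _ ≤ M * (M * Real.sqrt nB) * (M * Real.sqrt nA) := by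
        exact mul_le_mul (mul_le_mul h3 h1 (norm_nonneg _) hM0) h2 (norm_nonneg _)
          (by positivity)
    _ = M ^ 3 * (Real.sqrt nA * Real.sqrt nB) := by ring
    _ = M ^ 3 * Real.sqrt (nA * nB) := by
        rw [Real.sqrt_mul (Nat.cast_nonneg _)]
end

section
/- If A and B are mutually unbiased bases (|⟨a_i|b_j⟩| = 1/√d), |ψ⟩ is a pure state whose KD distribution is positive (all Q_{ij} real ≥ 0) with support uncertainties satisfying n_A n_B = d, then every non-zero quasiprobability equals exactly 1/d. -/
/-- On mutually unbiased bases, if the KD distribution of a pure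
state ψ is positive and n_A n_B = d, then every non-zero quasiprobability
equals 1/d. -/
theorem kd_mub_uniform (d : ℕ)
    (a b : OrthonormalBasis (Fin d) ℂ (EuclideanSpace ℂ (Fin d)))
    (hmub : ∀ i j, ‖(inner ℂ (a i) (b j) : ℂ)‖ = 1 / Real.sqrt d)
    (ψ : EuclideanSpace ℂ (Fin d)) (hψ : ‖ψ‖ = 1)
    (hQpos : ∀ i j,
      ((inner ℂ (b j) (a i) : ℂ) * (inner ℂ (a i) ψ : ℂ) * (inner ℂ ψ (b j) : ℂ)).im = 0 ∧
      0 ≤ ((inner ℂ (b j) (a i) : ℂ) * (inner ℂ (a i) ψ : ℂ) * (inner ℂ ψ (b j) : ℂ)).re)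
    (hsupp : (Finset.univ.filter fun i => (inner ℂ (a i) ψ : ℂ) ≠ 0).card *
             (Finset.univ.filter fun j => (inner ℂ (b j) ψ : ℂ) ≠ 0).card = d) :
    ∀ i j,
      (inner ℂ (b j) (a i) : ℂ) * (inner ℂ (a i) ψ : ℂ) * (inner ℂ ψ (b j) : ℂ) ≠ 0 →
      (inner ℂ (b j) (a i) : ℂ) * (inner ℂ (a i) ψ : ℂ) * (inner ℂ ψ (b j) : ℂ)
        = 1 / (d : ℂ) := by
  intro i j hne
  have hd : 0 < d := i.pos
  have hsd : (0:ℝ) < Real.sqrt d := Real.sqrt_pos.mpr (by exact_mod_cast hd)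
  set α : Fin d → ℝ := fun i => ‖(inner ℂ (a i) ψ : ℂ)‖ with hα
  set β : Fin d → ℝ := fun j => ‖(inner ℂ (b j) ψ : ℂ)‖ with hβ
  -- Q as a real number
  have hQ : ∀ i j, (inner ℂ (b j) (a i) : ℂ) * (inner ℂ (a i) ψ : ℂ) * (inner ℂ ψ (b j) : ℂ)
      = ((α i * β j / Real.sqrt d : ℝ) : ℂ) := by
    intro i j
    set z := (inner ℂ (b j) (a i) : ℂ) * (inner ℂ (a i) ψ : ℂ) * (inner ℂ ψ (b j) : ℂ) with hz
    have him := (hQpos i j).1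
    have hre := (hQpos i j).2
    have him' : z.im = 0 := him
    have hre' : (0:ℝ) ≤ z.re := hre
    have h1 : z = ((z.re : ℝ) : ℂ) := by
      apply Complex.ext
      · simp
      · simpa using him'
    have h2 : z.re = ‖z‖ := by
      rw [Complex.norm_def, Complex.normSq_apply, him']
      simp [Real.sqrt_mul_self hre']
    have hnorm : ‖z‖ = α i * β j / Real.sqrt d := by
      rw [hz, norm_mul, norm_mul]
      have e1 : ‖(inner ℂ (b j) (a i) : ℂ)‖ = 1 / Real.sqrt d := by
        rw [← hmub i j]; exact norm_inner_symm _ _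
      have e2 : ‖(inner ℂ ψ (b j) : ℂ)‖ = β j := norm_inner_symm _ _
      rw [e1, e2]; ring
    rw [h1, h2, hnorm]
  set SA := ∑ i, α i with hSA
  set SB := ∑ j, β j with hSB
  -- column sums: ∑_j Q i j = α i ^ 2
  have col : ∀ i, α i * SB / Real.sqrt d = α i ^ 2 := by
    intro i
    have hc : ∑ j, (inner ℂ (b j) (a i) : ℂ) * (inner ℂ (a i) ψ : ℂ) * (inner ℂ ψ (b j) : ℂ)
        = ((α i ^ 2 : ℝ) : ℂ) := by
      have : ∑ j, (inner ℂ (b j) (a i) : ℂ) * (inner ℂ (a i) ψ : ℂ) * (inner ℂ ψ (b j) : ℂ)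
          = (inner ℂ (a i) ψ : ℂ) * ∑ j, (inner ℂ ψ (b j) : ℂ) * (inner ℂ (b j) (a i) : ℂ) := by
        rw [Finset.mul_sum]; apply Finset.sum_congr rfl; intro j _; ring
      rw [this, b.sum_inner_mul_inner ψ (a i)]
      have : (inner ℂ ψ (a i) : ℂ) = starRingEnd ℂ (inner ℂ (a i) ψ : ℂ) := by
        exact (inner_conj_symm _ _).symm
      rw [this, mul_comm, Complex.conj_mul']
      norm_cast
    have : ((∑ j, α i * β j / Real.sqrt d : ℝ) : ℂ) = ((α i ^ 2 : ℝ) : ℂ) := by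
      rw [Complex.ofReal_sum, ← hc]
      exact Finset.sum_congr rfl fun j _ => (hQ i j).symm
    have hr : ∑ j, α i * β j / Real.sqrt d = α i ^ 2 := by exact_mod_cast this
    rw [← hr, ← Finset.sum_div, ← Finset.mul_sum]
  -- row sums: ∑_i Q i j = β j ^ 2
  have row : ∀ j, SA * β j / Real.sqrt d = β j ^ 2 := by
    intro j
    have hc : ∑ i, (inner ℂ (b j) (a i) : ℂ) * (inner ℂ (a i) ψ : ℂ) * (inner ℂ ψ (b j) : ℂ)
        = ((β j ^ 2 : ℝ) : ℂ) := by
      have : ∑ i, (inner ℂ (b j) (a i) : ℂ) * (inner ℂ (a i) ψ : ℂ) * (inner ℂ ψ (b j) : ℂ)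
          = (∑ i, (inner ℂ (b j) (a i) : ℂ) * (inner ℂ (a i) ψ : ℂ)) * (inner ℂ ψ (b j) : ℂ) := by
        rw [Finset.sum_mul]
      rw [this, a.sum_inner_mul_inner (b j) ψ]
      have : (inner ℂ ψ (b j) : ℂ) = starRingEnd ℂ (inner ℂ (b j) ψ : ℂ) := by
        exact (inner_conj_symm _ _).symm
      rw [this, Complex.mul_conj']
      norm_cast
    have : ((∑ i, α i * β j / Real.sqrt d : ℝ) : ℂ) = ((β j ^ 2 : ℝ) : ℂ) := by
      rw [Complex.ofReal_sum, ← hc]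
      exact Finset.sum_congr rfl fun i _ => (hQ i j).symm
    have hr : ∑ i, α i * β j / Real.sqrt d = β j ^ 2 := by exact_mod_cast this
    rw [← hr, ← Finset.sum_div, ← Finset.sum_mul]
  -- normalization: ∑_j β j ^ 2 = 1
  have hnormB : ∑ j, β j ^ 2 = 1 := by
    have hc : ∑ j, (inner ℂ ψ (b j) : ℂ) * (inner ℂ (b j) ψ : ℂ) = 1 := by
      rw [b.sum_inner_mul_inner ψ ψ, inner_self_eq_norm_sq_to_K, hψ]; norm_num
    have : ((∑ j, β j ^ 2 : ℝ) : ℂ) = 1 := by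
      rw [Complex.ofReal_sum, ← hc]
      apply Finset.sum_congr rfl; intro j _
      have : (inner ℂ ψ (b j) : ℂ) = starRingEnd ℂ (inner ℂ (b j) ψ : ℂ) :=
        (inner_conj_symm _ _).symm
      rw [this, Complex.conj_mul']; norm_cast
    exact_mod_cast this
  -- sum the row equations: SA * SB / √d = 1
  have key : SA * SB = Real.sqrt d := by
    have : ∑ j, SA * β j / Real.sqrt d = 1 := by
      rw [Finset.sum_congr rfl fun j _ => row j, hnormB]
    have h2 : SA * SB / Real.sqrt d = 1 := by
      rw [← this, ← Finset.sum_div, ← Finset.mul_sum]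
    field_simp at h2
    linarith [h2]
  -- nonvanishing
  have hαβ : α i ≠ 0 ∧ β j ≠ 0 := by
    rw [hQ i j] at hne
    constructor <;> intro h0 <;> apply hne <;> rw [h0] <;> simp
  have hαi : SB / Real.sqrt d = α i := by
    have hc := col i
    have : α i * (SB / Real.sqrt d) = α i * α i := by
      rw [← mul_div_assoc, hc, sq]
    exact mul_left_cancel₀ hαβ.1 this
  have hβj : SA / Real.sqrt d = β j := by
    have : β j * (SA / Real.sqrt d) = β j * β j := by
      rw [show β j * (SA / Real.sqrt d) = SA * β j / Real.sqrt d by ring, row j, sq]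
    exact mul_left_cancel₀ hαβ.2 this
  have h2 : Real.sqrt d * Real.sqrt d = (d:ℝ) := Real.mul_self_sqrt (by positivity)
  have hval : SB / Real.sqrt d * (SA / Real.sqrt d) / Real.sqrt d = 1 / d := by
    have e : SB / Real.sqrt d * (SA / Real.sqrt d) / Real.sqrt d
        = SA * SB / (Real.sqrt d * (Real.sqrt d * Real.sqrt d)) := by ring
    rw [e, key, h2, div_mul_eq_div_div, div_self hsd.ne']
  rw [hQ i j, ← hαi, ← hβj, hval]
  push_cast
  ring
end

section
/- For any two pure states |ψ⟩, |φ⟩ and an informationally complete KD distribution, |⟨ψ|φ⟩|² = ∑_{i,j} conj(Q_{ij}(ψ)) Q_{ij}(φ) / |⟨a_i|b_j⟩|². -/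
/-- For pure states ψ, φ and an informationally complete KD
distribution, |⟨ψ|φ⟩|² = ∑_{ij} conj(Q_{ij}(ψ)) Q_{ij}(φ) / |⟨a_i|b_j⟩|². -/
theorem kd_overlap_formula (d : ℕ)
    (a b : OrthonormalBasis (Fin d) ℂ (EuclideanSpace ℂ (Fin d)))
    (hab : ∀ i j, (inner ℂ (a i) (b j) : ℂ) ≠ 0)
    (ψ φ : EuclideanSpace ℂ (Fin d)) (hψ : ‖ψ‖ = 1) (hφ : ‖φ‖ = 1) :
    ((‖(inner ℂ ψ φ : ℂ)‖ : ℂ))^2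
      = ∑ i, ∑ j,
          (starRingEnd ℂ)
            ((inner ℂ (b j) (a i) : ℂ) * (inner ℂ (a i) ψ : ℂ) * (inner ℂ ψ (b j) : ℂ)) *
          ((inner ℂ (b j) (a i) : ℂ) * (inner ℂ (a i) φ : ℂ) * (inner ℂ φ (b j) : ℂ)) /
          ((‖(inner ℂ (a i) (b j) : ℂ)‖ : ℂ))^2 := by
  have hnorm : ∀ (x y : EuclideanSpace ℂ (Fin d)),
      ((‖(inner ℂ x y : ℂ)‖ : ℂ))^2 = (inner ℂ x y : ℂ) * (inner ℂ y x : ℂ) := by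
    intro x y
    rw [show (inner ℂ y x : ℂ) = (starRingEnd ℂ) (inner ℂ x y) from (inner_conj_symm _ _).symm,
      Complex.mul_conj']
  have key : ∀ i j,
      (starRingEnd ℂ)
        ((inner ℂ (b j) (a i) : ℂ) * (inner ℂ (a i) ψ : ℂ) * (inner ℂ ψ (b j) : ℂ)) *
      ((inner ℂ (b j) (a i) : ℂ) * (inner ℂ (a i) φ : ℂ) * (inner ℂ φ (b j) : ℂ)) /
      ((‖(inner ℂ (a i) (b j) : ℂ)‖ : ℂ))^2
      = ((inner ℂ ψ (a i) : ℂ) * (inner ℂ (a i) φ : ℂ)) *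
        ((inner ℂ φ (b j) : ℂ) * (inner ℂ (b j) ψ : ℂ)) := by
    intro i j
    have hba : (inner ℂ (b j) (a i) : ℂ) ≠ 0 := by
      rw [show (inner ℂ (b j) (a i) : ℂ) = (starRingEnd ℂ) (inner ℂ (a i) (b j)) from
        (inner_conj_symm _ _).symm]
      rw [starRingEnd_apply]
      exact star_ne_zero.mpr (hab i j)
    rw [hnorm (a i) (b j), div_eq_iff (mul_ne_zero (hab i j) hba)]
    simp only [map_mul, inner_conj_symm]
    ring
  simp only [key]
  rw [← Finset.sum_mul_sum]
  rw [OrthonormalBasis.sum_inner_mul_inner a, OrthonormalBasis.sum_inner_mul_inner b,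
    hnorm ψ φ]
end
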